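/- Let k ≥ 3 and consider the k-swap game with k²−2 strategic agents of each type whose topology is the tree with root α, a set B of k(k−1)−1 children of α, and for each β ∈ B a set Γ_β of k leaf children of β. In any assignment v, if two nodes β₁, β₂ ∈ B are occupied by agents of the same type T_x, and agents of some type T_y with y ≠ x simultaneously occupy a node of Γ_{β₁} and a node of Γ_{β₂}, then v is not an equilibrium: some pair of agents can both strictly increase their utility by swapping. -/

import Mathlib

open Finset

namespace SwapGame

/-- Build a simple graph from a (not necessarily symmetric) boolean relation
by symmetrizing it and removing loops. -/
def mkGraph {V : Type*} (r : V → V → Bool) : SimpleGraph V where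
  Adj a b := a ≠ b ∧ (r a b ∨ r b a)
  symm := by
    first
    | (constructor; intro a b h; exact ⟨Ne.symm h.1, Or.symm h.2⟩)
    | (intro a b h; exact ⟨Ne.symm h.1, Or.symm h.2⟩)
  loopless := by
    first
    | (constructor; intro a h; exact h.1 rfl)
    | (intro a h; exact h.1 rfl)

instance mkGraph.instDecidableRel {V : Type*} [DecidableEq V] (r : V → V → Bool) :
    DecidableRel (mkGraph r).Adj :=
  fun a b => inferInstanceAs (Decidable (a ≠ b ∧ (r a b ∨ r b a)))

variable {A V K : Type*} [Fintype V] [DecidableEq A] [DecidableEq V] [DecidableEq K]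

/-- The assignment obtained from `σ` by swapping the locations of agents `i` and `j`. -/
def swapA (σ : A ≃ V) (i j : A) : A ≃ V := (Equiv.swap i j).trans σ

/-- The utility of agent `i` under assignment `σ`: the fraction of the neighbors of the
node of `i` that are occupied by agents of the same type (friends of `i`). -/
def util (G : SimpleGraph V) [DecidableRel G.Adj] (c : A → K) (σ : A ≃ V) (i : A) : ℚ :=
  (((G.neighborFinset (σ i)).filter (fun w => c (σ.symm w) = c i)).card : ℚ) /
    ((G.neighborFinset (σ i)).card : ℚ)

/-- Agents `i` and `j` both strictly increase their utility by swapping their locations. -/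
def improving (G : SimpleGraph V) [DecidableRel G.Adj] (c : A → K) (σ : A ≃ V)
    (i j : A) : Prop :=
  util G c σ i < util G c (swapA σ i j) i ∧ util G c σ j < util G c (swapA σ i j) j

/-- An assignment is an equilibrium if no pair of agents can both strictly increase
their utility by swapping positions. -/
def isEquilibrium (G : SimpleGraph V) [DecidableRel G.Adj] (c : A → K) (σ : A ≃ V) : Prop :=
  ¬ ∃ i j : A, improving G c σ i j

/-- The social welfare of an assignment: the sum of the utilities of all agents. -/
def SW [Fintype A] (G : SimpleGraph V) [DecidableRel G.Adj] (c : A → K) (σ : A ≃ V) : ℚ :=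
  ∑ i : A, util G c σ i

/-- Agent `i` is exposed: at least one neighbor is occupied by an agent of another type. -/
def exposed (G : SimpleGraph V) [DecidableRel G.Adj] (c : A → K) (σ : A ≃ V) (i : A) : Prop :=
  ((G.neighborFinset (σ i)).filter (fun w => c (σ.symm w) ≠ c i)).Nonempty

instance exposed.instDecidable (G : SimpleGraph V) [DecidableRel G.Adj] (c : A → K)
    (σ : A ≃ V) : DecidablePred (exposed G c σ) :=
  fun _ => inferInstanceAs (Decidable (Finset.Nonempty _))

/-- The degree of integration of an assignment: the number of exposed agents. -/
def DI [Fintype A] (G : SimpleGraph V) [DecidableRel G.Adj] (c : A → K) (σ : A ≃ V) : ℕ :=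
  (univ.filter (fun i : A => exposed G c σ i)).card

end SwapGame

namespace SwapGame

/-- The three-layer tree topology for `k`-swap games: a root, a set `B` of
`k(k-1)-1` middle nodes (children of the root), and `k` leaf children per middle node. -/
inductive TV (k : ℕ) where
  | root : TV k
  | mid : Fin (k*(k-1)-1) → TV k
  | leaf : Fin (k*(k-1)-1) → Fin k → TV k
  deriving DecidableEq, Fintype

def adjT {k : ℕ} : TV k → TV k → Bool
  | .root, .mid _ => true
  | .mid i, .leaf j _ => i == j
  | _, _ => false

abbrev GT (k : ℕ) : SimpleGraph (TV k) := mkGraph (@adjT k)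

/-- Agents: `k` types with `k^2 - 2` agents each; the type of an agent is its first
component. -/
abbrev AgT (k : ℕ) := Fin k × Fin (k^2 - 2)

end SwapGame

namespace SwapGame

lemma neighborFinset_leaf {k : ℕ} (b : Fin (k*(k-1)-1)) (γ : Fin k) :
    (GT k).neighborFinset (TV.leaf b γ) = {TV.mid b} := by
  ext w
  cases w with
  | root => rw [SimpleGraph.mem_neighborFinset]; simp [GT, mkGraph, adjT]
  | mid i => rw [SimpleGraph.mem_neighborFinset]; simp [GT, mkGraph, adjT]
  | leaf i γ' => rw [SimpleGraph.mem_neighborFinset]; simp [GT, mkGraph, adjT]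

lemma neighborFinset_mid {k : ℕ} (b : Fin (k*(k-1)-1)) :
    (GT k).neighborFinset (TV.mid b) =
      insert TV.root ((univ : Finset (Fin k)).image (TV.leaf b)) := by
  ext w
  cases w with
  | root => rw [SimpleGraph.mem_neighborFinset]; simp [GT, mkGraph, adjT]
  | mid i => rw [SimpleGraph.mem_neighborFinset]; simp [GT, mkGraph, adjT]
  | leaf i γ' => rw [SimpleGraph.mem_neighborFinset]; simp [GT, mkGraph, adjT]

lemma card_neighborFinset_mid {k : ℕ} (b : Fin (k*(k-1)-1)) :
    ((GT k).neighborFinset (TV.mid b)).card = k + 1 := by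
  rw [neighborFinset_mid]
  rw [Finset.card_insert_of_notMem (by simp)]
  rw [Finset.card_image_of_injective _ (fun a b h => by injection h)]
  simp [Nat.add_comm]

lemma swapA_symm_apply {A V : Type*} [DecidableEq A] (σ : A ≃ V) (i j : A) (w : V) :
    (swapA σ i j).symm w = Equiv.swap i j (σ.symm w) := by
  simp [swapA]

/-- Lemma 1 of the paper: in the `k`-swap game (`k ≥ 3`) with `k² − 2`
strategic agents per type on the three-layer tree, if two middle nodes `β₁ ≠ β₂` are
occupied by agents of the same type, and agents of some other common type occupy a leaf
child of `β₁` and a leaf child of `β₂`, then the assignment is not an equilibrium: some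
pair of agents can both strictly increase their utility by swapping. -/
theorem not_equilibrium_of_same_mid_types (k : ℕ) (hk : 3 ≤ k) (σ : AgT k ≃ TV k)
    (b₁ b₂ : Fin (k*(k-1)-1)) (hb : b₁ ≠ b₂)
    (hsame : (σ.symm (TV.mid b₁)).1 = (σ.symm (TV.mid b₂)).1)
    (γ₁ γ₂ : Fin k)
    (hy : (σ.symm (TV.leaf b₁ γ₁)).1 = (σ.symm (TV.leaf b₂ γ₂)).1)
    (hxy : (σ.symm (TV.leaf b₁ γ₁)).1 ≠ (σ.symm (TV.mid b₁)).1) :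
    ∃ i j : AgT k, improving (GT k) Prod.fst σ i j := by
  classical
  set i := σ.symm (TV.leaf b₁ γ₁) with hi
  set j := σ.symm (TV.mid b₂) with hj
  have hσi : σ i = TV.leaf b₁ γ₁ := Equiv.apply_symm_apply σ _
  have hσj : σ j = TV.mid b₂ := Equiv.apply_symm_apply σ _
  have hij : i ≠ j := by
    intro h
    rw [h, hσj] at hσi
    exact absurd hσi (by simp)
  have hswi : swapA σ i j i = TV.mid b₂ := by
    simp [swapA, Equiv.swap_apply_left, hσj]
  have hswj : swapA σ i j j = TV.leaf b₁ γ₁ := by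
    simp [swapA, Equiv.swap_apply_right, hσi]
  -- the occupant of leaf b₂ γ₂ is not moved by the swap
  have hfix2 : (swapA σ i j).symm (TV.leaf b₂ γ₂) = σ.symm (TV.leaf b₂ γ₂) := by
    rw [swapA_symm_apply]
    apply Equiv.swap_apply_of_ne_of_ne
    · intro h; rw [hi] at h
      have h2 := σ.symm.injective h
      cases h2; exact hb rfl
    · intro h; rw [hj] at h
      have := σ.symm.injective h
      exact absurd this (by simp)
  -- the occupant of mid b₁ is not moved by the swap
  have hfix1 : (swapA σ i j).symm (TV.mid b₁) = σ.symm (TV.mid b₁) := by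
    rw [swapA_symm_apply]
    apply Equiv.swap_apply_of_ne_of_ne
    · intro h; rw [hi] at h
      have := σ.symm.injective h
      exact absurd this (by simp)
    · intro h; rw [hj] at h
      have h2 := σ.symm.injective h
      cases h2; exact hb rfl
  have hkpos : (0 : ℚ) < ((k : ℚ) + 1) := by positivity
  refine ⟨i, j, ?_, ?_⟩
  · -- utility of i (type y): before 0, after positive
    have hbefore : util (GT k) Prod.fst σ i = 0 := by
      unfold util
      rw [hσi, neighborFinset_leaf, Finset.filter_singleton]
      rw [if_neg (by exact fun h => hxy h.symm)]
      simp
    have hafter : 0 < util (GT k) Prod.fst (swapA σ i j) i := by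
      unfold util
      rw [hswi]
      apply div_pos
      · have hnonempty : (TV.leaf b₂ γ₂) ∈
            (((GT k).neighborFinset (TV.mid b₂)).filter
              (fun w => ((swapA σ i j).symm w).1 = i.1)) := by
          rw [Finset.mem_filter]
          constructor
          · rw [neighborFinset_mid]; simp
          · rw [hfix2, hi]; exact hy.symm
        exact_mod_cast Finset.card_pos.mpr ⟨_, hnonempty⟩
      · rw [card_neighborFinset_mid]; exact_mod_cast Nat.succ_pos k
    rw [hbefore]; exact hafter
  · -- utility of j (type x): before < 1, after = 1
    have hafter : util (GT k) Prod.fst (swapA σ i j) j = 1 := by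
      unfold util
      rw [hswj, neighborFinset_leaf, Finset.filter_singleton]
      rw [if_pos (by rw [hfix1, hj]; exact hsame)]
      simp
    have hbefore : util (GT k) Prod.fst σ j < 1 := by
      unfold util
      rw [hσj]
      rw [div_lt_one (by rw [card_neighborFinset_mid]; exact_mod_cast Nat.succ_pos k)]
      have hsub : (((GT k).neighborFinset (TV.mid b₂)).filter
          (fun w => (σ.symm w).1 = j.1)) ⊂ (GT k).neighborFinset (TV.mid b₂) := by
        refine Finset.ssubset_iff_of_subset (Finset.filter_subset _ _) |>.mpr ?_
        refine ⟨TV.leaf b₂ γ₂, ?_, ?_⟩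
        · rw [neighborFinset_mid]; simp
        · rw [Finset.mem_filter]
          rintro ⟨-, h⟩
          exact hxy ((hy.trans h).trans hsame.symm)
      exact_mod_cast Finset.card_lt_card hsub
    rw [hafter]; exact hbefore

end SwapGame
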